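/- Let ν be a σ-finite measure on a measurable space 𝒳, let h : 𝒳 → [0, ∞) and T : 𝒳 → ℝ^d be measurable, let W : ℝ^d → ℝ be twice continuously differentiable, and for θ ∈ ℝ^d write E_θ(x) := h(x)·exp(⟨θ, T(x)⟩ - W(θ)). Let Θ ⊆ ℝ^d be a convex set on which the family is normalized (∫ E_θ dν = 1 for every θ ∈ Θ), with P_θ the probability measure with ν-density E_θ. Let L ≥ 1, β ≥ 1, 0 < κ ≤ 1, λ > 0, ε ∈ (0,1), γ ≥ e², and t > 0 be real numbers, and suppose for every θ ∈ Θ: ‖∇W(θ)‖ ≤ L, κ‖v‖² ≤ ⟨v, ∇²W(θ) v⟩ ≤ λ‖v‖² for all v ∈ ℝ^d, and ∇W(θ) = ∫ T(x) dP_θ(x). Let θ₁, θ₂, θ* ∈ Θ satisfy: (i) ‖θ₁ - θ₂‖ ≥ √( (3·(16·max(L,β)·β + λ)/(κβ²)) · log(γ/ε) ); (ii) ‖θ₁ - θ*‖ ≤ ε/(2β); and (iii) the open Euclidean ball B((θ₁ + θ₂)/2, 1/(2β)) is contained in Θ. Then P_{θ*}[{x ∈ 𝒳 : E_{θ₁}(x)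 > t · E_{θ₂}(x)}] ≥ 1 - √t · (ε/γ)². -/

import Mathlib

open MeasureTheory

section Aux
variable {F : Type*} [NormedAddCommGroup F] [NormedSpace ℝ F]

lemma aux_hasDerivAt_line (W : F → ℝ) (hW : ContDiff ℝ 2 W) (x v : F) (r : ℝ) :
    HasDerivAt (fun s : ℝ => W (x + s • v)) (fderiv ℝ W (x + r • v) v) r := by
  have h1 : HasDerivAt (fun s : ℝ => x + s • v) v r := by
    simpa using ((hasDerivAt_id r).smul_const v).const_add x
  exact ((hW.differentiable two_ne_zero (x + r • v)).hasFDerivAt).comp_hasDerivAt r h1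

lemma aux_hasDerivAt_line2 (W : F → ℝ) (hW : ContDiff ℝ 2 W) (x v : F) (r : ℝ) :
    HasDerivAt (fun s : ℝ => fderiv ℝ W (x + s • v) v)
      (iteratedFDeriv ℝ 2 W (x + r • v) ![v, v]) r := by
  have h1 : HasDerivAt (fun s : ℝ => x + s • v) v r := by
    simpa using ((hasDerivAt_id r).smul_const v).const_add x
  have hWd : ContDiff ℝ 1 (fderiv ℝ W) := hW.fderiv_right (by norm_num)
  have h2 : HasDerivAt (fun s : ℝ => fderiv ℝ W (x + s • v))
      (fderiv ℝ (fderiv ℝ W) (x + r • v) v) r :=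
    ((hWd.differentiable one_ne_zero (x + r • v)).hasFDerivAt).comp_hasDerivAt r h1
  have h3 := (ContinuousLinearMap.apply ℝ ℝ v).hasFDerivAt.comp_hasDerivAt r h2
  rw [iteratedFDeriv_two_apply]
  exact h3

lemma aux_midpoint (W : F → ℝ) (hW : ContDiff ℝ 2 W) (c : ℝ) (x y : F)
    (S : Set F) (hS : Convex ℝ S) (hx : x ∈ S) (hy : y ∈ S)
    (hc : ∀ z ∈ S, c ≤ iteratedFDeriv ℝ 2 W z ![y - x, y - x]) :
    W ((1/2 : ℝ) • (x + y)) ≤ (W x + W y) / 2 - c / 8 := by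
  set v : F := y - x with hv
  set φ : ℝ → ℝ := fun s => W (x + s • v) - c / 2 * s ^ 2 with hφ
  have hmem : ∀ s : ℝ, s ∈ Set.Icc (0:ℝ) 1 → x + s • v ∈ S := by
    intro s hs
    have : x + s • v = (1 - s) • x + s • y := by
      rw [hv, smul_sub, sub_smul, one_smul]; abel
    rw [this]
    exact hS hx hy (by linarith [hs.1, hs.2]) hs.1 (by ring)
  have hφd : ∀ s : ℝ, HasDerivAt φ (fderiv ℝ W (x + s • v) v - c * s) s := by
    intro s
    have h1 := aux_hasDerivAt_line W hW x v s
    have h2 : HasDerivAt (fun r : ℝ => c / 2 * r ^ 2) (c * s) s := by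
      have := (hasDerivAt_pow 2 s).const_mul (c / 2)
      exact this.congr_deriv (by norm_num; ring)
    exact h1.sub h2
  have hφd' : deriv φ = fun s => fderiv ℝ W (x + s • v) v - c * s :=
    funext fun s => (hφd s).deriv
  have hφdd : ∀ s : ℝ, HasDerivAt (deriv φ) (iteratedFDeriv ℝ 2 W (x + s • v) ![v, v] - c) s := by
    intro s
    rw [hφd']
    have hcs : HasDerivAt (fun r : ℝ => c * r) c s := by
      simpa using (hasDerivAt_id s).const_mul c
    exact (aux_hasDerivAt_line2 W hW x v s).sub hcs
  have hconv : ConvexOn ℝ (Set.Icc (0:ℝ) 1) φ := by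
    apply convexOn_of_deriv2_nonneg (convex_Icc 0 1)
    · exact Continuous.continuousOn (by
        have : Continuous fun s : ℝ => x + s • v := by continuity
        exact (hW.continuous.comp this).sub (by continuity))
    · exact fun s _ => ((hφd s).differentiableAt).differentiableWithinAt
    · exact fun s _ => ((hφdd s).differentiableAt).differentiableWithinAt
    · intro s hs
      have hsm : s ∈ Set.Icc (0:ℝ) 1 := interior_subset hs
      have h2 : deriv^[2] φ s = deriv (deriv φ) s := rfl
      rw [h2, (hφdd s).deriv]
      have := hc (x + s • v) (hmem s hsm)
      linarith
  have h0 : (0:ℝ) ∈ Set.Icc (0:ℝ) 1 := by norm_num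
  have h1 : (1:ℝ) ∈ Set.Icc (0:ℝ) 1 := by norm_num
  have := hconv.2 h0 h1 (by norm_num : (0:ℝ) ≤ 1/2) (by norm_num : (0:ℝ) ≤ 1/2) (by norm_num)
  simp only [hφ, smul_eq_mul] at this
  have hpt : x + ((1:ℝ)/2 * 0 + 1/2 * 1) • v = (1/2 : ℝ) • (x + y) := by
    rw [hv]; module
  rw [hpt] at this
  have hx0 : x + (0:ℝ) • v = x := by simp
  have hy1 : x + (1:ℝ) • v = y := by rw [hv, one_smul]; abel
  rw [hx0, hy1] at this
  norm_num at this ⊢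
  linarith

end Aux

lemma aux_arith (L β κ lam ε ℓ D : ℝ) (hL : 1 ≤ L) (hβ : 1 ≤ β) (hκ0 : 0 < κ)
    (hlam : 0 < lam) (hε0 : 0 < ε) (hε1 : ε < 1) (hℓ2 : 2 ≤ ℓ)
    (hD2' : 3 * (16 * max L β * β + lam) * ℓ ≤ κ * β ^ 2 * D ^ 2) :
    -(κ * D ^ 2) / 8 + L * (ε / β) ≤ 2 * (-ℓ) := by
  set M : ℝ := max L β with hM
  have hLM : L ≤ M := le_max_left _ _
  have hβM : β ≤ M := le_max_right _ _
  have hβ0 : (0:ℝ) < β := by linarith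
  have hℓ0 : (0:ℝ) ≤ ℓ := by linarith
  have hL0 : (0:ℝ) ≤ L := by linarith
  have hM0 : (0:ℝ) ≤ M := le_trans hL0 hLM
  have hkey : 16 * ℓ * β + 8 * (L * ε) ≤ κ * β * D ^ 2 := by
    have hc1 : 48 * M * β * ℓ ≤ κ * β ^ 2 * D ^ 2 := by
      nlinarith [hD2', mul_nonneg hlam.le hℓ0]
    have hstep : 48 * M * ℓ ≤ κ * β * D ^ 2 := by nlinarith [hc1, hβ0]
    have h16 : 16 * ℓ * β ≤ 16 * M * ℓ := by
      nlinarith [mul_le_mul_of_nonneg_right hβM hℓ0]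
    have h8 : 8 * (L * ε) ≤ 32 * M * ℓ := by
      have e1 : L * ε ≤ L := by nlinarith
      have e3 : 2 * M ≤ M * ℓ := by nlinarith
      linarith
    linarith
  have e1 : -(κ * D ^ 2) / 8 + L * (ε / β) = (-(κ * β * D ^ 2) + 8 * (L * ε)) / (8 * β) := by
    field_simp
  rw [e1, div_le_iff₀ (by positivity : (0:ℝ) < 8 * β)]
  nlinarith [hkey]

theorem stmt_16 {d : ℕ} {𝒳 : Type*} [MeasurableSpace 𝒳]
    (ν : Measure 𝒳) [SigmaFinite ν]
    (h : 𝒳 → ℝ) (hh_nonneg : ∀ x, 0 ≤ h x) (hh_meas : Measurable h)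
    (T : 𝒳 → EuclideanSpace ℝ (Fin d)) (hT_meas : Measurable T)
    (W : EuclideanSpace ℝ (Fin d) → ℝ) (hW : ContDiff ℝ 2 W)
    (E : EuclideanSpace ℝ (Fin d) → 𝒳 → ℝ)
    (hE : ∀ θ x, E θ x = h x * Real.exp ((inner ℝ θ (T x) : ℝ) - W θ))
    (Θ : Set (EuclideanSpace ℝ (Fin d))) (hΘ : Convex ℝ Θ)
    (hnorm : ∀ θ ∈ Θ, ∫ x, E θ x ∂ν = 1)
    (P : EuclideanSpace ℝ (Fin d) → Measure 𝒳)
    (hP : ∀ θ, P θ = ν.withDensity (fun x => ENNReal.ofReal (E θ x)))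
    (L β κ lam ε γ t : ℝ)
    (hL : 1 ≤ L) (hβ : 1 ≤ β) (hκ0 : 0 < κ) (hκ1 : κ ≤ 1) (hlam : 0 < lam)
    (hε0 : 0 < ε) (hε1 : ε < 1) (hγ : Real.exp 2 ≤ γ) (ht : 0 < t)
    (hgradL : ∀ θ ∈ Θ, ‖gradient W θ‖ ≤ L)
    (hhess : ∀ θ ∈ Θ, ∀ v : EuclideanSpace ℝ (Fin d),
      κ * ‖v‖ ^ 2 ≤ iteratedFDeriv ℝ 2 W θ ![v, v] ∧
        iteratedFDeriv ℝ 2 W θ ![v, v] ≤ lam * ‖v‖ ^ 2)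
    (hgrad : ∀ θ ∈ Θ, gradient W θ = ∫ x, T x ∂(P θ))
    (θ₁ θ₂ θs : EuclideanSpace ℝ (Fin d))
    (hθ₁ : θ₁ ∈ Θ) (hθ₂ : θ₂ ∈ Θ) (hθs : θs ∈ Θ)
    (hsep : ‖θ₁ - θ₂‖ ≥
      Real.sqrt ((3 * (16 * max L β * β + lam) / (κ * β ^ 2)) * Real.log (γ / ε)))
    (hclose : ‖θ₁ - θs‖ ≤ ε / (2 * β))
    (hball : Metric.ball ((1 / 2 : ℝ) • (θ₁ + θ₂)) (1 / (2 * β)) ⊆ Θ) :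
    ENNReal.ofReal (1 - Real.sqrt t * (ε / γ) ^ 2) ≤
      P θs {x | t * E θ₂ x < E θ₁ x} := by
  have hβ0 : (0:ℝ) < β := by linarith
  have hγ0 : (0:ℝ) < γ := lt_of_lt_of_le (Real.exp_pos 2) hγ
  -- points
  set m : EuclideanSpace ℝ (Fin d) := (1/2 : ℝ) • (θ₁ + θ₂) with hm
  set m' : EuclideanSpace ℝ (Fin d) := θs + (1/2 : ℝ) • (θ₂ - θ₁) with hm'
  have hm'm : m' - m = θs - θ₁ := by rw [hm', hm]; module
  have hm'ball : m' ∈ Metric.ball m (1 / (2 * β)) := by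
    rw [Metric.mem_ball, dist_eq_norm, hm'm, norm_sub_rev]
    calc ‖θ₁ - θs‖ ≤ ε / (2 * β) := hclose
    _ < 1 / (2 * β) := by gcongr
  have hm'Θ : m' ∈ Θ := hball hm'ball
  have hmΘ : m ∈ Θ := hball (Metric.mem_ball_self (by positivity))
  -- measurability of densities
  have hEmeas : ∀ θ, Measurable (E θ) := by
    intro θ
    have : E θ = fun x => h x * Real.exp ((inner ℝ θ (T x) : ℝ) - W θ) := funext (hE θ)
    rw [this]
    exact hh_meas.mul (((Measurable.inner measurable_const hT_meas).sub_const (W θ)).exp)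
  have hEnn : ∀ θ x, 0 ≤ E θ x := fun θ x => by
    rw [hE]; exact mul_nonneg (hh_nonneg x) (Real.exp_pos _).le
  have hInt : ∀ θ ∈ Θ, Integrable (E θ) ν := by
    intro θ hθ
    by_contra hni
    have h1 := hnorm θ hθ
    rw [integral_undef hni] at h1
    exact one_ne_zero h1.symm
  -- the bad set
  set bad : Set 𝒳 := {x | E θ₁ x ≤ t * E θ₂ x} with hbad
  have hbad_meas : MeasurableSet bad :=
    measurableSet_le (hEmeas θ₁) ((hEmeas θ₂).const_mul t)
  have hgood : {x | t * E θ₂ x < E θ₁ x} = badᶜ := by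
    ext x; simp [hbad, not_le]
  -- Lipschitz bound on W over Θ
  have hfderivL : ∀ z ∈ Θ, ‖fderiv ℝ W z‖ ≤ L := by
    intro z hz
    have := hgradL z hz
    rwa [gradient, LinearIsometryEquiv.norm_map] at this
  have hlip : ∀ x ∈ Θ, ∀ y ∈ Θ, W y - W x ≤ L * ‖y - x‖ := by
    intro x hx y hy
    have := hΘ.norm_image_sub_le_of_norm_fderiv_le
      (fun z (hz : z ∈ Θ) => (hW.differentiable two_ne_zero).differentiableAt)
      hfderivL hx hy
    rw [Real.norm_eq_abs] at this
    exact le_trans (le_abs_self _) this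
  -- midpoint strong convexity
  set D : ℝ := ‖θ₁ - θ₂‖ with hD
  have hmidW : W m ≤ (W θ₁ + W θ₂) / 2 - (κ * D ^ 2) / 8 := by
    have := aux_midpoint W hW (κ * ‖θ₂ - θ₁‖ ^ 2) θ₁ θ₂ Θ hΘ hθ₁ hθ₂
      (fun z hz => (hhess z hz (θ₂ - θ₁)).1)
    rwa [norm_sub_rev θ₂ θ₁, ← hD, ← hm] at this
  -- the exponent
  set G : ℝ := (W θ₁ - W θ₂) / 2 + W m' - W θs with hG
  set C : ℝ := Real.sqrt t * Real.exp G with hC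
  have hC0 : 0 ≤ C := mul_nonneg (Real.sqrt_nonneg t) (Real.exp_pos _).le
  -- pointwise bound on bad
  have hpoint : ∀ x ∈ bad, E θs x ≤ C * E m' x := by
    intro x hx
    rcases (hh_nonneg x).eq_or_lt with hhx | hhx
    · rw [hE θs, hE m', ← hhx]
      simp
    · rw [hbad, Set.mem_setOf_eq, hE θ₁, hE θ₂] at hx
      have hA : Real.exp ((inner ℝ θ₁ (T x) : ℝ) - W θ₁)
          ≤ t * Real.exp ((inner ℝ θ₂ (T x) : ℝ) - W θ₂) := by
        rw [mul_left_comm t] at hx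
        exact le_of_mul_le_mul_left (by linarith) hhx
      have hA' : (inner ℝ θ₁ (T x) : ℝ) - W θ₁ ≤ Real.log t + ((inner ℝ θ₂ (T x) : ℝ) - W θ₂) := by
        have : Real.exp ((inner ℝ θ₁ (T x) : ℝ) - W θ₁)
            ≤ Real.exp (Real.log t + ((inner ℝ θ₂ (T x) : ℝ) - W θ₂)) := by
          rw [Real.exp_add, Real.exp_log ht]; exact hA
        exact Real.exp_le_exp.mp this
      rw [hE θs, hE m']
      have hsq : Real.sqrt t = Real.exp (Real.log t / 2) := by
        rw [← Real.log_sqrt ht.le, Real.exp_log (Real.sqrt_pos.mpr ht)]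
      rw [hC, hsq, mul_comm (Real.exp (Real.log t / 2) * Real.exp G) _, mul_assoc,
        ← Real.exp_add, ← Real.exp_add]
      apply mul_le_mul_of_nonneg_left _ (hh_nonneg x)
      apply Real.exp_le_exp.mpr
      have hinner : (inner ℝ m' (T x) : ℝ) = (inner ℝ θs (T x) : ℝ)
          + (1/2 : ℝ) * ((inner ℝ θ₂ (T x) : ℝ) - (inner ℝ θ₁ (T x) : ℝ)) := by
        rw [hm', inner_add_left, real_inner_smul_left, inner_sub_left]
      rw [hinner, hG]
      linarith
  -- P θs is a probability measure on bad's complement etc.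
  have hPuniv : ∀ θ ∈ Θ, P θ Set.univ = 1 := by
    intro θ hθ
    rw [hP θ, withDensity_apply _ MeasurableSet.univ, Measure.restrict_univ,
      ← ofReal_integral_eq_lintegral_ofReal (hInt θ hθ)
        (Filter.Eventually.of_forall (hEnn θ)),
      hnorm θ hθ, ENNReal.ofReal_one]
  have hlint : ∫⁻ x, ENNReal.ofReal (E m' x) ∂ν = 1 := by
    rw [← ofReal_integral_eq_lintegral_ofReal (hInt m' hm'Θ)
      (Filter.Eventually.of_forall (hEnn m')), hnorm m' hm'Θ, ENNReal.ofReal_one]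
  have hPbad : P θs bad ≤ ENNReal.ofReal C := by
    rw [hP θs, withDensity_apply _ hbad_meas]
    calc ∫⁻ x in bad, ENNReal.ofReal (E θs x) ∂ν
        ≤ ∫⁻ x in bad, ENNReal.ofReal C * ENNReal.ofReal (E m' x) ∂ν := by
          apply setLIntegral_mono (measurable_const.mul ((hEmeas m').ennreal_ofReal))
          intro x hx
          show ENNReal.ofReal (E θs x) ≤ ENNReal.ofReal C * ENNReal.ofReal (E m' x)
          rw [← ENNReal.ofReal_mul hC0]
          exact ENNReal.ofReal_le_ofReal (hpoint x hx)
      _ ≤ ∫⁻ x, ENNReal.ofReal C * ENNReal.ofReal (E m' x) ∂ν :=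
          setLIntegral_le_lintegral _ _
      _ = ENNReal.ofReal C * ∫⁻ x, ENNReal.ofReal (E m' x) ∂ν :=
          lintegral_const_mul _ ((hEmeas m').ennreal_ofReal)
      _ = ENNReal.ofReal C := by rw [hlint, mul_one]
  -- the analytic bound: G ≤ 2 log(ε/γ)
  have hεγ : (0:ℝ) < ε / γ := by positivity
  have hCbound : C ≤ Real.sqrt t * (ε / γ) ^ 2 := by
    have hl2 : (2:ℝ) ≤ Real.log (γ / ε) := by
      have h1 : γ ≤ γ / ε := by
        rw [le_div_iff₀ hε0]; nlinarith
      calc (2:ℝ) = Real.log (Real.exp 2) := (Real.log_exp 2).symm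
        _ ≤ Real.log (γ / ε) := Real.log_le_log (Real.exp_pos 2) (le_trans hγ h1)
    have hD2 : 3 * (16 * max L β * β + lam) / (κ * β ^ 2) * Real.log (γ / ε) ≤ D ^ 2 := by
      have harg : 0 ≤ 3 * (16 * max L β * β + lam) / (κ * β ^ 2) * Real.log (γ / ε) := by
        apply mul_nonneg (by positivity) (by linarith)
      calc 3 * (16 * max L β * β + lam) / (κ * β ^ 2) * Real.log (γ / ε)
          = Real.sqrt (3 * (16 * max L β * β + lam) / (κ * β ^ 2) * Real.log (γ / ε)) ^ 2 :=
            (Real.sq_sqrt harg).symm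
        _ ≤ D ^ 2 := pow_le_pow_left₀ (Real.sqrt_nonneg _) hsep 2
    have hD2' : 3 * (16 * max L β * β + lam) * Real.log (γ / ε) ≤ κ * β ^ 2 * D ^ 2 := by
      rw [div_mul_eq_mul_div, div_le_iff₀ (by positivity)] at hD2
      linarith
    have hfin0 := aux_arith L β κ lam ε (Real.log (γ / ε)) D hL hβ hκ0 hlam hε0 hε1 hl2 hD2'
    have hlog : Real.log (ε / γ) = -(Real.log (γ / ε)) := by rw [← Real.log_inv, inv_div]
    have hfinal : -(κ * D ^ 2) / 8 + L * (ε / β) ≤ 2 * Real.log (ε / γ) := by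
      rw [hlog]; exact hfin0
    -- Lipschitz pieces
    have hl1 : W θ₁ - W θs ≤ L * (ε / (2 * β)) := by
      calc W θ₁ - W θs ≤ L * ‖θ₁ - θs‖ := hlip θs hθs θ₁ hθ₁
        _ ≤ L * (ε / (2 * β)) := by
            apply mul_le_mul_of_nonneg_left hclose (by linarith)
    have hl2' : W m' - W m ≤ L * (ε / (2 * β)) := by
      calc W m' - W m ≤ L * ‖m' - m‖ := hlip m hmΘ m' hm'Θ
        _ ≤ L * (ε / (2 * β)) := by
            rw [hm'm, norm_sub_rev]
            apply mul_le_mul_of_nonneg_left hclose (by linarith)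
    have hGb : G ≤ -(κ * D ^ 2) / 8 + L * (ε / β) := by
      have hge : G = (W m' - (W θ₁ + W θ₂) / 2) + (W θ₁ - W θs) := by rw [hG]; ring
      rw [hge]
      have h1 : W m' - (W θ₁ + W θ₂) / 2 ≤ -(κ * D ^ 2) / 8 + L * (ε / (2 * β)) := by
        have := hmidW
        linarith
      have h2 : L * (ε / (2 * β)) + L * (ε / (2 * β)) = L * (ε / β) := by
        field_simp; ring
      linarith
    have hGle : G ≤ Real.log ((ε / γ) ^ 2) := by
      rw [Real.log_pow]
      push_cast
      linarith
    have : Real.exp G ≤ (ε / γ) ^ 2 := by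
      calc Real.exp G ≤ Real.exp (Real.log ((ε/γ)^2)) := Real.exp_le_exp.mpr hGle
        _ = (ε/γ)^2 := Real.exp_log (by positivity)
    rw [hC]
    exact mul_le_mul_of_nonneg_left this (Real.sqrt_nonneg t)
  -- assemble
  rw [hgood]
  have hPbad_ne : P θs bad ≠ ⊤ := ne_top_of_le_ne_top ENNReal.ofReal_ne_top hPbad
  rw [measure_compl hbad_meas hPbad_ne, hPuniv θs hθs]
  have h1 : ENNReal.ofReal (1 - Real.sqrt t * (ε / γ) ^ 2)
      = ENNReal.ofReal 1 - ENNReal.ofReal (Real.sqrt t * (ε / γ) ^ 2) :=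
    ENNReal.ofReal_sub _ (by positivity)
  rw [h1, ENNReal.ofReal_one]
  apply tsub_le_tsub_left
  exact le_trans hPbad (ENNReal.ofReal_le_ofReal hCbound)
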